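/- Let n be a positive integer. Let R_i, S_i, R_j, S_j be symmetric n×n real matrices, M_i, N_i, M_j, N_j invertible n×n real matrices with M_i·N_iᵀ = I − R_i·S_i and M_j·N_jᵀ = I − R_j·S_j, and Δ an n×n real matrix. Define Z₁ᵢ = fromBlocks R_i I M_iᵀ 0, Z₂ᵢ = fromBlocks I S_i 0 N_iᵀ, and analogously Z₁ⱼ, Z₂ⱼ; let X_i, X_j be symmetric 2n×2n real matrices with X_i·Z₁ᵢ = Z₂ᵢ and X_j·Z₁ⱼ = Z₂ⱼ; let A_r = fromBlocks I 0 0 Δ and Δ̂ = S_j·R_i + N_j·Δ·M_iᵀ. Then the 4n×4n block matrix fromBlocks X_i (A_rᵀ·X_j) (X_j·A_r) X_j is positive semidefinite if and only if the 4n×4n matrix with n×n blocks [[R_i, I, R_i, Δ̂ᵀ],[I, S_i, I, S_j],[R_i, I, R_j, I],[Δ̂, S_j, I, S_j]] is positive semidefinite. -/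
import Mathlib


open Matrix

lemma congr_psd_aux {m : Type*} [Fintype m] [DecidableEq m]
    (M Z W : Matrix m m ℝ) (hZW : Z * W = 1) :
    (∀ v : m → ℝ, 0 ≤ v ⬝ᵥ M.mulVec v) ↔
      (∀ v : m → ℝ, 0 ≤ v ⬝ᵥ (Zᵀ * M * Z).mulVec v) := by
  have key : ∀ v : m → ℝ, v ⬝ᵥ (Zᵀ * M * Z).mulVec v
      = (Z.mulVec v) ⬝ᵥ M.mulVec (Z.mulVec v) := by
    intro v
    rw [← Matrix.mulVec_mulVec, ← Matrix.mulVec_mulVec,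
      Matrix.dotProduct_mulVec, Matrix.vecMul_transpose]
  constructor
  · intro h v
    rw [key]; exact h _
  · intro h v
    have := h (W.mulVec v)
    rwa [key, Matrix.mulVec_mulVec, hZW, Matrix.one_mulVec] at this


/-- Convexification of the hysteresis switching boundary condition: under the
linearizing changes of variables `X_i·Z₁ᵢ = Z₂ᵢ` and `X_j·Z₁ⱼ = Z₂ⱼ` (with
invertible factors `M, N` satisfying `MNᵀ = I − RS`), positive semidefiniteness of
`[[X_i, A_rᵀX_j],[X_jA_r, X_j]]` with reset matrix `A_r = diag(I, Δ)` is
equivalent to positive semidefiniteness of the block matrix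
`[[R_i, I, R_i, Δ̂ᵀ],[I, S_i, I, S_j],[R_i, I, R_j, I],[Δ̂, S_j, I, S_j]]`
where `Δ̂ = S_j·R_i + N_j·Δ·M_iᵀ`. Positive semidefiniteness is expressed via the
quadratic form `xᵀPx ≥ 0` for all `x`. -/
theorem stmt_9
    (n : ℕ) (hn : 0 < n)
    (Ri Si Mi Ni Rj Sj Mj Nj Δ : Matrix (Fin n) (Fin n) ℝ)
    (hRi : Riᵀ = Ri) (hSi : Siᵀ = Si) (hRj : Rjᵀ = Rj) (hSj : Sjᵀ = Sj)
    (hMi : IsUnit Mi) (hNi : IsUnit Ni) (hMj : IsUnit Mj) (hNj : IsUnit Nj)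
    (hMNi : Mi * Niᵀ = 1 - Ri * Si) (hMNj : Mj * Njᵀ = 1 - Rj * Sj)
    (Xi Xj : Matrix (Fin n ⊕ Fin n) (Fin n ⊕ Fin n) ℝ)
    (hXisym : Xiᵀ = Xi) (hXjsym : Xjᵀ = Xj)
    (hXi : Xi * Matrix.fromBlocks Ri 1 Miᵀ 0 = Matrix.fromBlocks 1 Si 0 Niᵀ)
    (hXj : Xj * Matrix.fromBlocks Rj 1 Mjᵀ 0 = Matrix.fromBlocks 1 Sj 0 Njᵀ) :
    (∀ v : (Fin n ⊕ Fin n) ⊕ (Fin n ⊕ Fin n) → ℝ,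
        0 ≤ v ⬝ᵥ (Matrix.fromBlocks Xi
            ((Matrix.fromBlocks 1 0 0 Δ)ᵀ * Xj)
            (Xj * Matrix.fromBlocks 1 0 0 Δ) Xj).mulVec v) ↔
      (∀ v : (Fin n ⊕ Fin n) ⊕ (Fin n ⊕ Fin n) → ℝ,
        0 ≤ v ⬝ᵥ (Matrix.fromBlocks
            (Matrix.fromBlocks Ri 1 1 Si)
            (Matrix.fromBlocks Ri (Sj * Ri + Nj * Δ * Miᵀ)ᵀ 1 Sj)
            (Matrix.fromBlocks Ri 1 (Sj * Ri + Nj * Δ * Miᵀ) Sj)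
            (Matrix.fromBlocks Rj 1 1 Sj)).mulVec v) := by
  -- inverses of Miᵀ, Mjᵀ
  have hdMi : IsUnit (Miᵀ).det := by
    rw [Matrix.det_transpose]; exact (Matrix.isUnit_iff_isUnit_det _).mp hMi
  have hdMj : IsUnit (Mjᵀ).det := by
    rw [Matrix.det_transpose]; exact (Matrix.isUnit_iff_isUnit_det _).mp hMj
  have hMiT : Miᵀ * (Miᵀ)⁻¹ = 1 := Matrix.mul_nonsing_inv _ hdMi
  have hMjT : Mjᵀ * (Mjᵀ)⁻¹ = 1 := Matrix.mul_nonsing_inv _ hdMj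
  set Z1i : Matrix (Fin n ⊕ Fin n) (Fin n ⊕ Fin n) ℝ := Matrix.fromBlocks Ri 1 Miᵀ 0 with hZ1i
  set Z1j : Matrix (Fin n ⊕ Fin n) (Fin n ⊕ Fin n) ℝ := Matrix.fromBlocks Rj 1 Mjᵀ 0 with hZ1j
  set Wi : Matrix (Fin n ⊕ Fin n) (Fin n ⊕ Fin n) ℝ :=
    Matrix.fromBlocks 0 (Miᵀ)⁻¹ 1 (-(Ri * (Miᵀ)⁻¹)) with hWi
  set Wj : Matrix (Fin n ⊕ Fin n) (Fin n ⊕ Fin n) ℝ :=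
    Matrix.fromBlocks 0 (Mjᵀ)⁻¹ 1 (-(Rj * (Mjᵀ)⁻¹)) with hWj
  have hZWi : Z1i * Wi = 1 := by
    rw [hZ1i, hWi, Matrix.fromBlocks_multiply]
    rw [← Matrix.fromBlocks_one]
    congr 1 <;> simp [hMiT, Matrix.mul_assoc]
  have hZWj : Z1j * Wj = 1 := by
    rw [hZ1j, hWj, Matrix.fromBlocks_multiply]
    rw [← Matrix.fromBlocks_one]
    congr 1 <;> simp [hMjT, Matrix.mul_assoc]
  set A : Matrix (Fin n ⊕ Fin n) (Fin n ⊕ Fin n) ℝ := Matrix.fromBlocks 1 0 0 Δ with hA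
  set Z : Matrix ((Fin n ⊕ Fin n) ⊕ (Fin n ⊕ Fin n)) ((Fin n ⊕ Fin n) ⊕ (Fin n ⊕ Fin n)) ℝ :=
    Matrix.fromBlocks Z1i 0 0 Z1j with hZ
  set W : Matrix ((Fin n ⊕ Fin n) ⊕ (Fin n ⊕ Fin n)) ((Fin n ⊕ Fin n) ⊕ (Fin n ⊕ Fin n)) ℝ :=
    Matrix.fromBlocks Wi 0 0 Wj with hW
  have hZW : Z * W = 1 := by
    rw [hZ, hW, Matrix.fromBlocks_multiply, ← Matrix.fromBlocks_one]
    simp [hZWi, hZWj]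
  -- block computations
  have e1 : Z1iᵀ * Xi * Z1i = Matrix.fromBlocks Ri 1 1 Si := by
    rw [Matrix.mul_assoc, hXi, hZ1i, Matrix.fromBlocks_transpose,
      Matrix.fromBlocks_multiply]
    simp [hRi, hMNi]
  have e4 : Z1jᵀ * Xj * Z1j = Matrix.fromBlocks Rj 1 1 Sj := by
    rw [Matrix.mul_assoc, hXj, hZ1j, Matrix.fromBlocks_transpose,
      Matrix.fromBlocks_multiply]
    simp [hRj, hMNj]
  have e2 : Z1iᵀ * (Aᵀ * Xj) * Z1j
      = Matrix.fromBlocks Ri ((Sj * Ri + Nj * Δ * Miᵀ)ᵀ) 1 Sj := by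
    rw [show Z1iᵀ * (Aᵀ * Xj) * Z1j = Z1iᵀ * Aᵀ * (Xj * Z1j) by
      noncomm_ring, hXj, hA, hZ1i, Matrix.fromBlocks_transpose,
      Matrix.fromBlocks_transpose, Matrix.fromBlocks_multiply,
      Matrix.fromBlocks_multiply]
    have : (Sj * Ri + Nj * Δ * Miᵀ)ᵀ = Ri * Sj + Mi * Δᵀ * Njᵀ := by
      simp [Matrix.transpose_add, Matrix.transpose_mul, hRi, hSj, Matrix.mul_assoc]
    rw [this]
    simp [hRi, Matrix.mul_assoc]
  have e3 : Z1jᵀ * (Xj * A) * Z1i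
      = Matrix.fromBlocks Ri 1 (Sj * Ri + Nj * Δ * Miᵀ) Sj := by
    have key : Z1jᵀ * (Xj * A) * Z1i = (Z1iᵀ * (Aᵀ * Xj) * Z1j)ᵀ := by
      simp only [Matrix.transpose_mul, Matrix.transpose_transpose, hXjsym]
      noncomm_ring
    rw [key, e2, Matrix.fromBlocks_transpose, Matrix.transpose_transpose,
      hRi, hSj, Matrix.transpose_one]
  -- the congruence identity
  have hEq : Zᵀ * (Matrix.fromBlocks Xi (Aᵀ * Xj) (Xj * A) Xj) * Z
      = Matrix.fromBlocks
          (Matrix.fromBlocks Ri 1 1 Si)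
          (Matrix.fromBlocks Ri (Sj * Ri + Nj * Δ * Miᵀ)ᵀ 1 Sj)
          (Matrix.fromBlocks Ri 1 (Sj * Ri + Nj * Δ * Miᵀ) Sj)
          (Matrix.fromBlocks Rj 1 1 Sj) := by
    rw [hZ, Matrix.fromBlocks_transpose, Matrix.fromBlocks_multiply,
      Matrix.fromBlocks_multiply]
    simp [e1, e2, e3, e4]
  rw [congr_psd_aux _ Z W hZW, hEq]
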